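/- Exact support recovery at low noise for the abstract cone-constrained lasso (Fuchs-type result for C-BP): Let (a₀,b₀) ∈ C_h^P ∖ {0}, write I↑ = I↑(a₀,b₀), I↓ = I↓(a₀,b₀), and assume Ā = ((A+(h/2)B)_{I↑}, (A−(h/2)B)_{I↓}) has full rank. Assume moreover that the Fuchs-type pre-certificate q_F = Ā(Ā^*Ā)^{-1}𝟙 satisfies ((A+(h/2)B)^* q_F)_k < 1 for all k ∉ I↑ and ((A−(h/2)B)^* q_F)_k < 1 for all k ∉ I↓. Set T = min of the set {a₀_i + (2/h) b₀_i : i ∈ I↑} ∪ {a₀_i − (2/h) b₀_i : i ∈ I↓}. Then there exist constants C¹ > 0, C² > 0 such that for all λ with 0 < λ ≤ C¹ T and all w ∈ H with ‖w‖ < C² λ, the solution (a_λ,b_λ) of Q_λ(A a₀ + B b₀ + w) is unique, satisfies I↑(a_λ,b_λ) = I↑ and I↓(a_λ,b_λ) = I↓, and equals (a_λ, b_λ) = (a₀, b₀) + H_h(Ā^+ w) − λ H_h((Ā^*Ā)^{-1}𝟙), where Ā^+ = (Ā^*Ā)^{-1}Ā^* and the vectors indexed by I↑ and I↓ are extended by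 zero before applying H_h. -/

import Mathlib

open scoped BigOperators
noncomputable section

open scoped InnerProductSpace RealInnerProductSpace


lemma cbp_coord_abs_le_norm {P : ℕ} (x : EuclideanSpace ℝ (Fin P)) (i : Fin P) : |x i| ≤ ‖x‖ := by
  have h1 : ⟪EuclideanSpace.single i (1:ℝ), x⟫_ℝ = x i := by
    simp [PiLp.inner_apply, EuclideanSpace.single_apply]
  have h2 := abs_real_inner_le_norm (EuclideanSpace.single i (1:ℝ)) x
  rw [h1] at h2
  simpa [EuclideanSpace.norm_single] using h2

lemma cbp_norm_le_of_sq {a b : ℝ} (hb : 0 ≤ b) (h : a^2 ≤ b^2) (ha : 0 ≤ a) : a ≤ b := by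
  nlinarith
lemma cbp_solve {H : Type*} [NormedAddCommGroup H] [InnerProductSpace ℝ H] [CompleteSpace H]
    {P : ℕ} (Φp Φm : EuclideanSpace ℝ (Fin P) →L[ℝ] H) (Iup Idn : Set (Fin P))
    (hfr : ∀ u v : EuclideanSpace ℝ (Fin P),
      (∀ i, i ∉ Iup → u i = 0) → (∀ i, i ∉ Idn → v i = 0) →
      Φp u + Φm v = 0 → u = 0 ∧ v = 0)
    (ρu ρv : EuclideanSpace ℝ (Fin P)) :
    ∃ u v : EuclideanSpace ℝ (Fin P),
      (∀ i, i ∉ Iup → u i = 0) ∧ (∀ i, i ∉ Idn → v i = 0) ∧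
      (∀ i ∈ Iup, (ContinuousLinearMap.adjoint Φp) (Φp u + Φm v) i = ρu i) ∧
      (∀ i ∈ Idn, (ContinuousLinearMap.adjoint Φm) (Φp u + Φm v) i = ρv i) := by
  classical
  let mu : EuclideanSpace ℝ (Fin P) → EuclideanSpace ℝ (Fin P) := fun x => WithLp.toLp 2 (fun i => if i ∈ Iup then x i else 0 : Fin P → ℝ)
  let md : EuclideanSpace ℝ (Fin P) → EuclideanSpace ℝ (Fin P) := fun x => WithLp.toLp 2 (fun i => if i ∈ Idn then x i else 0 : Fin P → ℝ)
  have hmu_add : ∀ x y, mu (x + y) = mu x + mu y := by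
    intro x y; ext i
    by_cases hi : i ∈ Iup <;> simp [mu, hi, PiLp.add_apply]
  have hmd_add : ∀ x y, md (x + y) = md x + md y := by
    intro x y; ext i
    by_cases hi : i ∈ Idn <;> simp [md, hi, PiLp.add_apply]
  have hmu_smul : ∀ (c : ℝ) x, mu (c • x) = c • mu x := by
    intro c x; ext i
    by_cases hi : i ∈ Iup <;> simp [mu, hi, PiLp.smul_apply]
  have hmd_smul : ∀ (c : ℝ) x, md (c • x) = c • md x := by
    intro c x; ext i
    by_cases hi : i ∈ Idn <;> simp [md, hi, PiLp.smul_apply]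
  let Ψ : EuclideanSpace ℝ (Fin P) × EuclideanSpace ℝ (Fin P) → H := fun z => Φp (mu z.1) + Φm (md z.2)
  let G : (EuclideanSpace ℝ (Fin P) × EuclideanSpace ℝ (Fin P)) →ₗ[ℝ] (EuclideanSpace ℝ (Fin P) × EuclideanSpace ℝ (Fin P)) :=
    { toFun := fun z =>
        (mu ((ContinuousLinearMap.adjoint Φp) (Ψ z)) + (z.1 - mu z.1),
         md ((ContinuousLinearMap.adjoint Φm) (Ψ z)) + (z.2 - md z.2))
      map_add' := by
        intro z w
        have hΨ : Ψ (z + w) = Ψ z + Ψ w := by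
          simp only [Ψ, Prod.fst_add, Prod.snd_add, hmu_add, hmd_add, map_add]
          abel
        simp only [hΨ, map_add, hmu_add, hmd_add, Prod.fst_add, Prod.snd_add, Prod.mk_add_mk,
          Prod.mk.injEq]
        constructor <;> module
      map_smul' := by
        intro c z
        have hΨ : Ψ (c • z) = c • Ψ z := by
          simp only [Ψ, Prod.smul_fst, Prod.smul_snd, hmu_smul, hmd_smul, map_smul]
          rw [smul_add]
        simp only [hΨ, map_smul, hmu_smul, hmd_smul, Prod.smul_fst, Prod.smul_snd,
          Prod.smul_mk, RingHom.id_apply, smul_sub, Prod.mk.injEq]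
        constructor <;> module }
  have hGinj : Function.Injective G := by
    rw [← LinearMap.ker_eq_bot, LinearMap.ker_eq_bot']
    intro z hz
    have h1 := congrArg Prod.fst hz
    have h2 := congrArg Prod.snd hz
    simp only [G, LinearMap.coe_mk, AddHom.coe_mk, Prod.fst_zero, Prod.snd_zero] at h1 h2
    have hz1 : ∀ i, i ∉ Iup → z.1 i = 0 := by
      intro i hi
      have := congrArg (fun x : EuclideanSpace ℝ (Fin P) => x i) h1
      simpa [mu, hi, PiLp.add_apply, PiLp.sub_apply] using this
    have hz2 : ∀ i, i ∉ Idn → z.2 i = 0 := by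
      intro i hi
      have := congrArg (fun x : EuclideanSpace ℝ (Fin P) => x i) h2
      simpa [md, hi, PiLp.add_apply, PiLp.sub_apply] using this
    have hmuz : mu z.1 = z.1 := by
      ext i; by_cases hi : i ∈ Iup
      · simp [mu, hi]
      · simp [mu, hi, hz1 i hi]
    have hmdz : md z.2 = z.2 := by
      ext i; by_cases hi : i ∈ Idn
      · simp [md, hi]
      · simp [md, hi, hz2 i hi]
    have hΨeq : Ψ z = Φp z.1 + Φm z.2 := by
      simp only [Ψ]; rw [hmuz, hmdz]
    have hadj1 : ∀ i, i ∈ Iup → (ContinuousLinearMap.adjoint Φp) (Ψ z) i = 0 := by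
      intro i hi
      have := congrArg (fun x : EuclideanSpace ℝ (Fin P) => x i) h1
      simpa [mu, hi, hmuz, PiLp.add_apply, PiLp.sub_apply] using this
    have hadj2 : ∀ i, i ∈ Idn → (ContinuousLinearMap.adjoint Φm) (Ψ z) i = 0 := by
      intro i hi
      have := congrArg (fun x : EuclideanSpace ℝ (Fin P) => x i) h2
      simpa [md, hi, hmdz, PiLp.add_apply, PiLp.sub_apply] using this
    have hΨ0 : Ψ z = 0 := by
      have e1 : ⟪Ψ z, Φp z.1⟫_ℝ = ∑ i, (ContinuousLinearMap.adjoint Φp) (Ψ z) i * z.1 i := by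
        rw [← ContinuousLinearMap.adjoint_inner_left]
        simp [PiLp.inner_apply, mul_comm]
      have e2 : ⟪Ψ z, Φm z.2⟫_ℝ = ∑ i, (ContinuousLinearMap.adjoint Φm) (Ψ z) i * z.2 i := by
        rw [← ContinuousLinearMap.adjoint_inner_left]
        simp [PiLp.inner_apply, mul_comm]
      have s1 : ∑ i, (ContinuousLinearMap.adjoint Φp) (Ψ z) i * z.1 i = 0 := by
        apply Finset.sum_eq_zero; intro i _
        by_cases hi : i ∈ Iup
        · rw [hadj1 i hi, zero_mul]
        · rw [hz1 i hi, mul_zero]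
      have s2 : ∑ i, (ContinuousLinearMap.adjoint Φm) (Ψ z) i * z.2 i = 0 := by
        apply Finset.sum_eq_zero; intro i _
        by_cases hi : i ∈ Idn
        · rw [hadj2 i hi, zero_mul]
        · rw [hz2 i hi, mul_zero]
      have hinner : ⟪Ψ z, Ψ z⟫_ℝ = 0 := by
        nth_rewrite 2 [hΨeq]
        rw [inner_add_right, e1, e2, s1, s2, add_zero]
      exact inner_self_eq_zero.mp hinner
    have := hfr z.1 z.2 hz1 hz2 (by rw [← hΨeq]; exact hΨ0)
    exact Prod.ext this.1 this.2
  have hGsurj : Function.Surjective G := LinearMap.injective_iff_surjective.mp hGinj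
  obtain ⟨z, hzeq⟩ := hGsurj (mu ρu, md ρv)
  have h1 := congrArg Prod.fst hzeq
  have h2 := congrArg Prod.snd hzeq
  simp only [G, LinearMap.coe_mk, AddHom.coe_mk] at h1 h2
  have hz1 : ∀ i, i ∉ Iup → z.1 i = 0 := by
    intro i hi
    have := congrArg (fun x : EuclideanSpace ℝ (Fin P) => x i) h1
    simpa [mu, hi, PiLp.add_apply, PiLp.sub_apply] using this
  have hz2 : ∀ i, i ∉ Idn → z.2 i = 0 := by
    intro i hi
    have := congrArg (fun x : EuclideanSpace ℝ (Fin P) => x i) h2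
    simpa [md, hi, PiLp.add_apply, PiLp.sub_apply] using this
  have hmuz : mu z.1 = z.1 := by
    ext i; by_cases hi : i ∈ Iup
    · simp [mu, hi]
    · simp [mu, hi, hz1 i hi]
  have hmdz : md z.2 = z.2 := by
    ext i; by_cases hi : i ∈ Idn
    · simp [md, hi]
    · simp [md, hi, hz2 i hi]
  have hΨeq : Ψ z = Φp z.1 + Φm z.2 := by
    simp only [Ψ]; rw [hmuz, hmdz]
  refine ⟨z.1, z.2, hz1, hz2, ?_, ?_⟩
  · intro i hi
    have := congrArg (fun x : EuclideanSpace ℝ (Fin P) => x i) h1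
    rw [← hΨeq]
    simpa [mu, hi, PiLp.add_apply, PiLp.sub_apply] using this
  · intro i hi
    have := congrArg (fun x : EuclideanSpace ℝ (Fin P) => x i) h2
    rw [← hΨeq]
    simpa [md, hi, PiLp.add_apply, PiLp.sub_apply] using this
lemma cbp_antilip {H : Type*} [NormedAddCommGroup H] [InnerProductSpace ℝ H] [CompleteSpace H]
    {P : ℕ} (Φp Φm : EuclideanSpace ℝ (Fin P) →L[ℝ] H) (Iup Idn : Set (Fin P))
    (hfr : ∀ u v : EuclideanSpace ℝ (Fin P),
      (∀ i, i ∉ Iup → u i = 0) → (∀ i, i ∉ Idn → v i = 0) →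
      Φp u + Φm v = 0 → u = 0 ∧ v = 0) :
    ∃ c : ℝ, 0 < c ∧ ∀ u v : EuclideanSpace ℝ (Fin P),
      (∀ i, i ∉ Iup → u i = 0) → (∀ i, i ∉ Idn → v i = 0) →
      ‖u‖ ≤ c * ‖Φp u + Φm v‖ ∧ ‖v‖ ≤ c * ‖Φp u + Φm v‖ := by
  classical
  let S : Submodule ℝ (EuclideanSpace ℝ (Fin P) × EuclideanSpace ℝ (Fin P)) :=
    { carrier := {z | (∀ i, i ∉ Iup → z.1 i = 0) ∧ (∀ i, i ∉ Idn → z.2 i = 0)}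
      add_mem' := by
        rintro a b ⟨ha1, ha2⟩ ⟨hb1, hb2⟩
        constructor
        · intro i hi
          have : (a.1 + b.1) i = a.1 i + b.1 i := rfl
          rw [Prod.fst_add, this, ha1 i hi, hb1 i hi, add_zero]
        · intro i hi
          have : (a.2 + b.2) i = a.2 i + b.2 i := rfl
          rw [Prod.snd_add, this, ha2 i hi, hb2 i hi, add_zero]
      zero_mem' := ⟨fun _ _ => rfl, fun _ _ => rfl⟩
      smul_mem' := by
        rintro c a ⟨ha1, ha2⟩
        constructor
        · intro i hi
          have : (c • a.1) i = c * a.1 i := rfl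
          rw [Prod.smul_fst, this, ha1 i hi, mul_zero]
        · intro i hi
          have : (c • a.2) i = c * a.2 i := rfl
          rw [Prod.smul_snd, this, ha2 i hi, mul_zero] }
  let F : (EuclideanSpace ℝ (Fin P) × EuclideanSpace ℝ (Fin P)) →ₗ[ℝ] H :=
    Φp.toLinearMap.comp (LinearMap.fst ℝ _ _) + Φm.toLinearMap.comp (LinearMap.snd ℝ _ _)
  let f : S →ₗ[ℝ] H := F.comp S.subtype
  have hFapp : ∀ z : EuclideanSpace ℝ (Fin P) × EuclideanSpace ℝ (Fin P),
      F z = Φp z.1 + Φm z.2 := fun z => rfl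
  have hfinj : Function.Injective f := by
    rw [← LinearMap.ker_eq_bot, LinearMap.ker_eq_bot']
    rintro ⟨⟨zu, zv⟩, hzu, hzv⟩ hz
    have h0 : Φp zu + Φm zv = 0 := hz
    obtain ⟨h1, h2⟩ := hfr zu zv hzu hzv h0
    apply Subtype.ext
    exact Prod.ext h1 h2
  let e : S ≃ₗ[ℝ] LinearMap.range f := LinearEquiv.ofInjective f hfinj
  let g := LinearMap.toContinuousLinearMap e.symm.toLinearMap
  refine ⟨‖g‖ + 1, by positivity, ?_⟩
  intro u v hu hv
  have hz : ((u, v) : EuclideanSpace ℝ (Fin P) × EuclideanSpace ℝ (Fin P)) ∈ S := ⟨hu, hv⟩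
  set z : S := ⟨(u, v), hz⟩
  have hnorm : ‖z‖ ≤ ‖g‖ * ‖Φp u + Φm v‖ := by
    have hg : ∀ y, g y = e.symm y := fun y => rfl
    have h1 : g (e z) = z := by rw [hg]; exact e.symm_apply_apply z
    have h3 : ‖g (e z)‖ ≤ ‖g‖ * ‖e z‖ := g.le_opNorm _
    have h4 : ‖e z‖ = ‖Φp u + Φm v‖ := by
      have h5 : ((e z : LinearMap.range f) : H) = f z := by
        simp [e, LinearEquiv.ofInjective_apply]
      have h6 : ‖e z‖ = ‖((e z : LinearMap.range f) : H)‖ := rfl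
      rw [h6, h5]
      rfl
    rw [h1, h4] at h3
    exact h3
  have hfst : ‖u‖ ≤ ‖z‖ :=
    norm_fst_le ((u, v) : EuclideanSpace ℝ (Fin P) × EuclideanSpace ℝ (Fin P))
  have hsnd : ‖v‖ ≤ ‖z‖ :=
    norm_snd_le ((u, v) : EuclideanSpace ℝ (Fin P) × EuclideanSpace ℝ (Fin P))
  have hnn : (0:ℝ) ≤ ‖Φp u + Φm v‖ := norm_nonneg _
  constructor
  · calc ‖u‖ ≤ ‖z‖ := hfst
    _ ≤ ‖g‖ * ‖Φp u + Φm v‖ := hnorm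
    _ ≤ (‖g‖ + 1) * ‖Φp u + Φm v‖ := by nlinarith [norm_nonneg g]
  · calc ‖v‖ ≤ ‖z‖ := hsnd
    _ ≤ ‖g‖ * ‖Φp u + Φm v‖ := hnorm
    _ ≤ (‖g‖ + 1) * ‖Φp u + Φm v‖ := by nlinarith [norm_nonneg g]

set_option maxHeartbeats 16000000

/-- **Exact support recovery at low noise for the abstract cone-constrained lasso
(Fuchs-type result for C-BP).**  `H` is a real Hilbert space, `A, B : ℝ^P → H`,
`h > 0`, and `C_h^P` is the cone `{(a,b) : aᵢ ≥ 0, |bᵢ| ≤ (h/2)aᵢ}`.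
`(a₀,b₀) ∈ C_h^P ∖ {0}` with `I↑ = {i : a₀ᵢ + (2/h)b₀ᵢ > 0}`,
`I↓ = {i : a₀ᵢ − (2/h)b₀ᵢ > 0}`; `Ā = ((A+(h/2)B)_{I↑}, (A−(h/2)B)_{I↓})` has full
rank, and the Fuchs pre-certificate `q_F = Ā(Ā^*Ā)⁻¹𝟙` (encoded by `q_F = Ā(u₀,v₀)`
with the Gram equations) satisfies the strict dual conditions off `I↑, I↓`.  Then
for `0 < λ ≤ C¹T` and `‖w‖ < C²λ` the solution of `Q_λ(A a₀ + B b₀ + w)` is unique,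
has the same `I↑, I↓`, and is given by
`(a_λ,b_λ) = (a₀,b₀) + H_h(Ā⁺w) − λ H_h((Ā^*Ā)⁻¹𝟙)`
(encoded by the normal equations below). -/
theorem cbp_fuchs_low_noise_support_recovery
    {H : Type*} [NormedAddCommGroup H] [InnerProductSpace ℝ H] [CompleteSpace H]
    {P : ℕ} (A B : EuclideanSpace ℝ (Fin P) →L[ℝ] H)
    (h : ℝ) (hh : 0 < h)
    (a₀ b₀ : EuclideanSpace ℝ (Fin P))
    (hcone₀ : ∀ i, 0 ≤ a₀ i ∧ |b₀ i| ≤ (h/2) * a₀ i)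
    (hne : ¬ (a₀ = 0 ∧ b₀ = 0))
    (Iup Idn : Set (Fin P))
    (hIup : Iup = {i : Fin P | 0 < a₀ i + (2/h) * b₀ i})
    (hIdn : Idn = {i : Fin P | 0 < a₀ i - (2/h) * b₀ i})
    -- Ā = ((A+(h/2)B)_{I↑}, (A−(h/2)B)_{I↓}) has full rank
    (hfullrank : ∀ u v : EuclideanSpace ℝ (Fin P),
      (∀ i, i ∉ Iup → u i = 0) → (∀ i, i ∉ Idn → v i = 0) →
      (A + (h/2) • B) u + (A - (h/2) • B) v = 0 → u = 0 ∧ v = 0)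
    -- the Fuchs pre-certificate q_F = Ā(Ā^*Ā)⁻¹𝟙
    (qF : H) (u₀ v₀ : EuclideanSpace ℝ (Fin P))
    (hu₀ : ∀ i, i ∉ Iup → u₀ i = 0) (hv₀ : ∀ i, i ∉ Idn → v₀ i = 0)
    (hqF : qF = (A + (h/2) • B) u₀ + (A - (h/2) • B) v₀)
    (hqF_gram : (∀ i ∈ Iup, (ContinuousLinearMap.adjoint (A + (h/2) • B)) qF i = 1) ∧
      (∀ i ∈ Idn, (ContinuousLinearMap.adjoint (A - (h/2) • B)) qF i = 1))
    -- the strict pre-certificate conditions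
    (hqF_up : ∀ k, k ∉ Iup → (ContinuousLinearMap.adjoint (A + (h/2) • B)) qF k < 1)
    (hqF_dn : ∀ k, k ∉ Idn → (ContinuousLinearMap.adjoint (A - (h/2) • B)) qF k < 1) :
    ∃ C₁ C₂ : ℝ, 0 < C₁ ∧ 0 < C₂ ∧
      ∀ lam : ℝ, 0 < lam →
      (∀ i ∈ Iup, lam ≤ C₁ * (a₀ i + (2/h) * b₀ i)) →
      (∀ i ∈ Idn, lam ≤ C₁ * (a₀ i - (2/h) * b₀ i)) →
      ∀ w : H, ‖w‖ < C₂ * lam →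
      ∃ alam blam : EuclideanSpace ℝ (Fin P),
        -- (a_λ, b_λ) is a solution of Q_λ(A a₀ + B b₀ + w) …
        ((∀ i, 0 ≤ alam i ∧ |blam i| ≤ (h/2) * alam i) ∧
          ∀ a b : EuclideanSpace ℝ (Fin P),
            (∀ i, 0 ≤ a i ∧ |b i| ≤ (h/2) * a i) →
            (1/2) * ‖A a₀ + B b₀ + w - A alam - B blam‖^2 + lam * ∑ i, |alam i| ≤
            (1/2) * ‖A a₀ + B b₀ + w - A a - B b‖^2 + lam * ∑ i, |a i|) ∧
        -- … and it is the unique one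
        (∀ a b : EuclideanSpace ℝ (Fin P),
          (∀ i, 0 ≤ a i ∧ |b i| ≤ (h/2) * a i) →
          (∀ a' b' : EuclideanSpace ℝ (Fin P),
            (∀ i, 0 ≤ a' i ∧ |b' i| ≤ (h/2) * a' i) →
            (1/2) * ‖A a₀ + B b₀ + w - A a - B b‖^2 + lam * ∑ i, |a i| ≤
            (1/2) * ‖A a₀ + B b₀ + w - A a' - B b'‖^2 + lam * ∑ i, |a' i|) →
          a = alam ∧ b = blam) ∧
        -- support recovery: I↑(a_λ,b_λ) = I↑, I↓(a_λ,b_λ) = I↓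
        {i : Fin P | 0 < alam i + (2/h) * blam i} = Iup ∧
        {i : Fin P | 0 < alam i - (2/h) * blam i} = Idn ∧
        -- (a_λ,b_λ) = (a₀,b₀) + H_h(Ā⁺ w) − λ H_h((Ā^*Ā)⁻¹ 𝟙)
        (∃ u v : EuclideanSpace ℝ (Fin P),
          (∀ i, i ∉ Iup → u i = 0) ∧ (∀ i, i ∉ Idn → v i = 0) ∧
          alam = a₀ + u + v ∧ blam = b₀ + (h/2) • (u - v) ∧
          (∀ i ∈ Iup, (ContinuousLinearMap.adjoint (A + (h/2) • B))
            (A (alam - a₀) + B (blam - b₀) - w) i = -lam) ∧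
          (∀ i ∈ Idn, (ContinuousLinearMap.adjoint (A - (h/2) • B))
            (A (alam - a₀) + B (blam - b₀) - w) i = -lam)) := by
  classical
  have hh2 : 0 < h / 2 := by linarith
  have hhne : (h : ℝ) ≠ 0 := ne_of_gt hh
  set Φp := A + (h/2) • B with hΦpdef
  set Φm := A - (h/2) • B with hΦmdef
  have hcomb : ∀ u v : EuclideanSpace ℝ (Fin P),
      A (u + v) + B ((h/2) • (u - v)) = Φp u + Φm v := by
    intro u v
    rw [hΦpdef, hΦmdef]
    simp only [map_add, map_smul, map_sub, ContinuousLinearMap.add_apply,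
      ContinuousLinearMap.sub_apply, ContinuousLinearMap.smul_apply, smul_sub]
    module
  -- change of variables
  let ups : EuclideanSpace ℝ (Fin P) → EuclideanSpace ℝ (Fin P) → EuclideanSpace ℝ (Fin P) :=
    fun a b => WithLp.toLp 2 (fun i => (a i + (2/h) * b i) / 2 : Fin P → ℝ)
  let dns : EuclideanSpace ℝ (Fin P) → EuclideanSpace ℝ (Fin P) → EuclideanSpace ℝ (Fin P) :=
    fun a b => WithLp.toLp 2 (fun i => (a i - (2/h) * b i) / 2 : Fin P → ℝ)
  have hups_apply : ∀ a b i, ups a b i = (a i + (2/h) * b i) / 2 := fun _ _ _ => rfl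
  have hdns_apply : ∀ a b i, dns a b i = (a i - (2/h) * b i) / 2 := fun _ _ _ => rfl
  have hsplit_a : ∀ a b : EuclideanSpace ℝ (Fin P), ∀ i, a i = ups a b i + dns a b i := by
    intro a b i; rw [hups_apply, hdns_apply]; ring
  have hsplit_b : ∀ a b : EuclideanSpace ℝ (Fin P),
      ∀ i, b i = (h/2) * (ups a b i - dns a b i) := by
    intro a b i; rw [hups_apply, hdns_apply]; field_simp; ring
  have hsplit_av : ∀ a b : EuclideanSpace ℝ (Fin P), a = ups a b + dns a b := by
    intro a b; ext i
    rw [show (ups a b + dns a b) i = ups a b i + dns a b i from rfl]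
    exact hsplit_a a b i
  have hsplit_bv : ∀ a b : EuclideanSpace ℝ (Fin P), b = (h/2) • (ups a b - dns a b) := by
    intro a b; ext i
    rw [show ((h/2) • (ups a b - dns a b)) i = (h/2) * (ups a b i - dns a b i) from rfl]
    exact hsplit_b a b i
  have hAB : ∀ a b : EuclideanSpace ℝ (Fin P), A a + B b = Φp (ups a b) + Φm (dns a b) := by
    intro a b
    have h1 := hcomb (ups a b) (dns a b)
    rw [← hsplit_av a b, ← hsplit_bv a b] at h1
    exact h1
  have hups_nonneg : ∀ a b : EuclideanSpace ℝ (Fin P),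
      (∀ i, 0 ≤ a i ∧ |b i| ≤ (h/2) * a i) → ∀ i, 0 ≤ ups a b i ∧ 0 ≤ dns a b i := by
    intro a b hfe i
    obtain ⟨h1, h2⟩ := hfe i
    rw [abs_le] at h2
    have h3 : (0:ℝ) < 2/h := by positivity
    constructor
    · rw [hups_apply]
      have k1 : (2/h) * (-((h/2) * a i)) ≤ (2/h) * b i := mul_le_mul_of_nonneg_left h2.1 h3.le
      have k2 : (2/h) * (-((h/2) * a i)) = -a i := by field_simp
      rw [k2] at k1
      linarith
    · rw [hdns_apply]
      have k1 : (2/h) * b i ≤ (2/h) * ((h/2) * a i) := mul_le_mul_of_nonneg_left h2.2 h3.le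
      have k2 : (2/h) * ((h/2) * a i) = a i := by field_simp
      rw [k2] at k1
      linarith
  have habs_sum : ∀ a b : EuclideanSpace ℝ (Fin P), (∀ i, 0 ≤ a i ∧ |b i| ≤ (h/2) * a i) →
      ∑ i, |a i| = ∑ i, (ups a b i + dns a b i) := by
    intro a b hfe
    refine Finset.sum_congr rfl fun i _ => ?_
    rw [abs_of_nonneg (hfe i).1]
    exact hsplit_a a b i
  -- base point
  have huz_nonneg := hups_nonneg a₀ b₀ hcone₀
  have huz_pos : ∀ i ∈ Iup, 0 < ups a₀ b₀ i := by
    intro i hi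
    rw [hIup] at hi
    have h1 : 0 < a₀ i + (2/h) * b₀ i := hi
    rw [hups_apply]; linarith
  have hvz_pos : ∀ i ∈ Idn, 0 < dns a₀ b₀ i := by
    intro i hi
    rw [hIdn] at hi
    have h1 : 0 < a₀ i - (2/h) * b₀ i := hi
    rw [hdns_apply]; linarith
  have huz_off : ∀ i, i ∉ Iup → ups a₀ b₀ i = 0 := by
    intro i hi
    rw [hIup] at hi
    simp only [Set.mem_setOf_eq, not_lt] at hi
    have h1 := (huz_nonneg i).1
    have h2 : ups a₀ b₀ i ≤ 0 := by rw [hups_apply]; linarith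
    linarith
  have hvz_off : ∀ i, i ∉ Idn → dns a₀ b₀ i = 0 := by
    intro i hi
    rw [hIdn] at hi
    simp only [Set.mem_setOf_eq, not_lt] at hi
    have h1 := (huz_nonneg i).2
    have h2 : dns a₀ b₀ i ≤ 0 := by rw [hdns_apply]; linarith
    linarith
  have h2uz : ∀ i, a₀ i + (2/h) * b₀ i = 2 * ups a₀ b₀ i := by
    intro i; rw [hups_apply]; ring
  have h2vz : ∀ i, a₀ i - (2/h) * b₀ i = 2 * dns a₀ b₀ i := by
    intro i; rw [hdns_apply]; ring
  -- margin
  set Ku : Finset (Fin P) := Finset.univ.filter (fun k => k ∉ Iup) with hKu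
  set Kd : Finset (Fin P) := Finset.univ.filter (fun k => k ∉ Idn) with hKd
  set Tset : Finset ℝ := insert (1:ℝ)
    ((Ku.image (fun k => 1 - (ContinuousLinearMap.adjoint Φp) qF k)) ∪
     (Kd.image (fun k => 1 - (ContinuousLinearMap.adjoint Φm) qF k))) with hTset
  have hTne : Tset.Nonempty := ⟨1, Finset.mem_insert_self _ _⟩
  set δ := Tset.min' hTne with hδdef
  have hδmem : δ ∈ Tset := Tset.min'_mem hTne
  have hδpos : 0 < δ := by
    rcases Finset.mem_insert.mp hδmem with h1 | h1
    · rw [h1]; norm_num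
    · rcases Finset.mem_union.mp h1 with h2 | h2
      · obtain ⟨k, hk, hk2⟩ := Finset.mem_image.mp h2
        have hk3 : k ∉ Iup := (Finset.mem_filter.mp hk).2
        have := hqF_up k hk3
        rw [← hk2]; linarith
      · obtain ⟨k, hk, hk2⟩ := Finset.mem_image.mp h2
        have hk3 : k ∉ Idn := (Finset.mem_filter.mp hk).2
        have := hqF_dn k hk3
        rw [← hk2]; linarith
  have hδup : ∀ k, k ∉ Iup → δ ≤ 1 - (ContinuousLinearMap.adjoint Φp) qF k := by
    intro k hk
    apply Finset.min'_le
    exact Finset.mem_insert_of_mem (Finset.mem_union_left _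
      (Finset.mem_image_of_mem _ (Finset.mem_filter.mpr ⟨Finset.mem_univ _, hk⟩)))
  have hδdn : ∀ k, k ∉ Idn → δ ≤ 1 - (ContinuousLinearMap.adjoint Φm) qF k := by
    intro k hk
    apply Finset.min'_le
    exact Finset.mem_insert_of_mem (Finset.mem_union_right _
      (Finset.mem_image_of_mem _ (Finset.mem_filter.mpr ⟨Finset.mem_univ _, hk⟩)))
  set M := ‖Φp‖ + ‖Φm‖ + 1 with hMdef
  have hMpos : 0 < M := by positivity
  obtain ⟨c, hcpos, hanti⟩ := cbp_antilip Φp Φm Iup Idn hfullrank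
  set N := ‖u₀‖ + ‖v₀‖ with hNdef
  have hN0 : (0:ℝ) ≤ N := by positivity
  set C₂ := δ / M with hC2def
  have hC2pos : 0 < C₂ := div_pos hδpos hMpos
  set K := c * C₂ + N + 1 with hKdef
  have hKpos : 0 < K := by positivity
  set C₁ := 1 / (2 * K) with hC1def
  have hC1pos : 0 < C₁ := by positivity
  refine ⟨C₁, C₂, hC1pos, hC2pos, ?_⟩
  intro lam hlam hTu hTd w hw
  have hlamne : lam ≠ 0 := ne_of_gt hlam
  -- solve the restricted normal equations
  let onev : EuclideanSpace ℝ (Fin P) := WithLp.toLp 2 (fun _ => 1)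
  obtain ⟨zu, zv, hzu, hzv, hNEu, hNEv⟩ := cbp_solve Φp Φm Iup Idn hfullrank
    ((ContinuousLinearMap.adjoint Φp) w - lam • onev)
    ((ContinuousLinearMap.adjoint Φm) w - lam • onev)
  set Az : H := Φp zu + Φm zv with hAzdef
  have hNEu' : ∀ i ∈ Iup, (ContinuousLinearMap.adjoint Φp) Az i
      = (ContinuousLinearMap.adjoint Φp) w i - lam := by
    intro i hi
    have h1 := hNEu i hi
    have h2 : ((ContinuousLinearMap.adjoint Φp) w - lam • onev) i
        = (ContinuousLinearMap.adjoint Φp) w i - lam * 1 := rfl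
    rw [h2] at h1
    rw [h1]; ring
  have hNEv' : ∀ i ∈ Idn, (ContinuousLinearMap.adjoint Φm) Az i
      = (ContinuousLinearMap.adjoint Φm) w i - lam := by
    intro i hi
    have h1 := hNEv i hi
    have h2 : ((ContinuousLinearMap.adjoint Φm) w - lam • onev) i
        = (ContinuousLinearMap.adjoint Φm) w i - lam * 1 := rfl
    rw [h2] at h1
    rw [h1]; ring
  set ζu := zu + lam • u₀ with hζudef
  set ζv := zv + lam • v₀ with hζvdef
  have hζu_off : ∀ i, i ∉ Iup → ζu i = 0 := by
    intro i hi
    have h1 : ζu i = zu i + lam * u₀ i := rfl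
    rw [h1, hzu i hi, hu₀ i hi, mul_zero, add_zero]
  have hζv_off : ∀ i, i ∉ Idn → ζv i = 0 := by
    intro i hi
    have h1 : ζv i = zv i + lam * v₀ i := rfl
    rw [h1, hzv i hi, hv₀ i hi, mul_zero, add_zero]
  set Aζ : H := Φp ζu + Φm ζv with hAζdef
  have hAζ_eq : Aζ = Az + lam • qF := by
    rw [hAζdef, hAzdef, hζudef, hζvdef, hqF]
    simp only [map_add, map_smul]
    module
  set r : H := Aζ - w with hrdef
  have hadjru : ∀ i ∈ Iup, (ContinuousLinearMap.adjoint Φp) r i = 0 := by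
    intro i hi
    have h2 : (ContinuousLinearMap.adjoint Φp) r i
        = ((ContinuousLinearMap.adjoint Φp) Az i
            + lam * (ContinuousLinearMap.adjoint Φp) qF i)
          - (ContinuousLinearMap.adjoint Φp) w i := by
      rw [hrdef, hAζ_eq, map_sub, map_add, map_smul]
      rfl
    rw [h2, hNEu' i hi, hqF_gram.1 i hi]; ring
  have hadjrd : ∀ i ∈ Idn, (ContinuousLinearMap.adjoint Φm) r i = 0 := by
    intro i hi
    have h2 : (ContinuousLinearMap.adjoint Φm) r i
        = ((ContinuousLinearMap.adjoint Φm) Az i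
            + lam * (ContinuousLinearMap.adjoint Φm) qF i)
          - (ContinuousLinearMap.adjoint Φm) w i := by
      rw [hrdef, hAζ_eq, map_sub, map_add, map_smul]
      rfl
    rw [h2, hNEv' i hi, hqF_gram.2 i hi]; ring
  have horth : ⟪Aζ, r⟫_ℝ = 0 := by
    have e1 : ⟪Φp ζu, r⟫_ℝ = ∑ i, (ContinuousLinearMap.adjoint Φp) r i * ζu i := by
      rw [real_inner_comm, ← ContinuousLinearMap.adjoint_inner_left]
      simp [PiLp.inner_apply, mul_comm]
    have e2 : ⟪Φm ζv, r⟫_ℝ = ∑ i, (ContinuousLinearMap.adjoint Φm) r i * ζv i := by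
      rw [real_inner_comm, ← ContinuousLinearMap.adjoint_inner_left]
      simp [PiLp.inner_apply, mul_comm]
    have s1 : ∑ i, (ContinuousLinearMap.adjoint Φp) r i * ζu i = 0 := by
      refine Finset.sum_eq_zero fun i _ => ?_
      by_cases hi : i ∈ Iup
      · rw [hadjru i hi, zero_mul]
      · rw [hζu_off i hi, mul_zero]
    have s2 : ∑ i, (ContinuousLinearMap.adjoint Φm) r i * ζv i = 0 := by
      refine Finset.sum_eq_zero fun i _ => ?_
      by_cases hi : i ∈ Idn
      · rw [hadjrd i hi, zero_mul]
      · rw [hζv_off i hi, mul_zero]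
    rw [hAζdef, inner_add_left, e1, e2, s1, s2, add_zero]
  have hw_eq : w = Aζ - r := by rw [hrdef]; abel
  have hpyth : ‖w‖^2 = ‖Aζ‖^2 + ‖r‖^2 := by
    rw [hw_eq, norm_sub_sq_real, horth]; ring
  have hr_le : ‖r‖ ≤ ‖w‖ :=
    cbp_norm_le_of_sq (norm_nonneg _) (by nlinarith [sq_nonneg ‖Aζ‖]) (norm_nonneg _)
  have hAζ_le : ‖Aζ‖ ≤ ‖w‖ :=
    cbp_norm_le_of_sq (norm_nonneg _) (by nlinarith [sq_nonneg ‖r‖]) (norm_nonneg _)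
  have hζbounds := hanti ζu ζv hζu_off hζv_off
  have hζu_le : ‖ζu‖ ≤ c * ‖w‖ :=
    le_trans hζbounds.1 (mul_le_mul_of_nonneg_left hAζ_le hcpos.le)
  have hζv_le : ‖ζv‖ ≤ c * ‖w‖ :=
    le_trans hζbounds.2 (mul_le_mul_of_nonneg_left hAζ_le hcpos.le)
  -- dual vector
  set p : H := lam⁻¹ • (w - Az) with hpdef
  have hlamp : lam • p = w - Az := by
    rw [hpdef, smul_smul, mul_inv_cancel₀ hlamne, one_smul]
  have hpqF : p - qF = (-lam⁻¹) • r := by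
    have h1 : w - Az = lam • qF - r := by rw [hrdef, hAζ_eq]; abel
    rw [hpdef, h1, smul_sub, smul_smul, inv_mul_cancel₀ hlamne, one_smul]
    module
  have hpqF_norm : ‖p - qF‖ < C₂ := by
    rw [hpqF, norm_smul]
    have h1 : ‖(-lam⁻¹ : ℝ)‖ = lam⁻¹ := by
      rw [norm_neg, Real.norm_eq_abs, abs_of_pos (inv_pos.mpr hlam)]
    rw [h1]
    have h2 : lam⁻¹ * ‖r‖ ≤ lam⁻¹ * ‖w‖ :=
      mul_le_mul_of_nonneg_left hr_le (inv_pos.mpr hlam).le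
    have h3 : lam⁻¹ * ‖w‖ < lam⁻¹ * (C₂ * lam) :=
      mul_lt_mul_of_pos_left hw (inv_pos.mpr hlam)
    have h4 : lam⁻¹ * (C₂ * lam) = C₂ := by field_simp
    linarith
  set cvec := (ContinuousLinearMap.adjoint Φp) p with hcvecdef
  set dvec := (ContinuousLinearMap.adjoint Φm) p with hdvecdef
  have hcon : ∀ i ∈ Iup, cvec i = 1 := by
    intro i hi
    have h1 : cvec i = lam⁻¹ * ((ContinuousLinearMap.adjoint Φp) w i
        - (ContinuousLinearMap.adjoint Φp) Az i) := by
      rw [hcvecdef, hpdef, map_smul, map_sub]; rfl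
    rw [h1, hNEu' i hi]
    field_simp
    ring
  have hdon : ∀ i ∈ Idn, dvec i = 1 := by
    intro i hi
    have h1 : dvec i = lam⁻¹ * ((ContinuousLinearMap.adjoint Φm) w i
        - (ContinuousLinearMap.adjoint Φm) Az i) := by
      rw [hdvecdef, hpdef, map_smul, map_sub]; rfl
    rw [h1, hNEv' i hi]
    field_simp
    ring
  have hcoff : ∀ k, k ∉ Iup → cvec k < 1 := by
    intro k hk
    have h1 : (ContinuousLinearMap.adjoint Φp) (p - qF) k
        = cvec k - (ContinuousLinearMap.adjoint Φp) qF k := by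
      rw [map_sub]; rfl
    have h2 : |((ContinuousLinearMap.adjoint Φp) (p - qF)) k|
        ≤ ‖(ContinuousLinearMap.adjoint Φp) (p - qF)‖ := cbp_coord_abs_le_norm _ _
    have h3 : ‖(ContinuousLinearMap.adjoint Φp) (p - qF)‖
        ≤ ‖ContinuousLinearMap.adjoint Φp‖ * ‖p - qF‖ :=
      (ContinuousLinearMap.adjoint Φp).le_opNorm _
    have h4 : ‖ContinuousLinearMap.adjoint Φp‖ = ‖Φp‖ :=
      (ContinuousLinearMap.adjoint : _ ≃ₗᵢ⋆[ℝ] _).norm_map Φp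
    have h5 : ‖Φp‖ * ‖p - qF‖ ≤ M * ‖p - qF‖ := by
      apply mul_le_mul_of_nonneg_right _ (norm_nonneg _)
      rw [hMdef]; linarith [norm_nonneg Φm]
    have h6 : M * ‖p - qF‖ < M * C₂ := mul_lt_mul_of_pos_left hpqF_norm hMpos
    have h7 : M * C₂ = δ := by rw [hC2def]; field_simp
    have h8 := hδup k hk
    have h9 : ((ContinuousLinearMap.adjoint Φp) (p - qF)) k < δ := by
      calc ((ContinuousLinearMap.adjoint Φp) (p - qF)) k
          ≤ |((ContinuousLinearMap.adjoint Φp) (p - qF)) k| := le_abs_self _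
        _ ≤ ‖ContinuousLinearMap.adjoint Φp‖ * ‖p - qF‖ := le_trans h2 h3
        _ = ‖Φp‖ * ‖p - qF‖ := by rw [h4]
        _ ≤ M * ‖p - qF‖ := h5
        _ < M * C₂ := h6
        _ = δ := h7
    linarith [h1, h9]
  have hdoff : ∀ k, k ∉ Idn → dvec k < 1 := by
    intro k hk
    have h1 : (ContinuousLinearMap.adjoint Φm) (p - qF) k
        = dvec k - (ContinuousLinearMap.adjoint Φm) qF k := by
      rw [map_sub]; rfl
    have h2 : |((ContinuousLinearMap.adjoint Φm) (p - qF)) k|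
        ≤ ‖(ContinuousLinearMap.adjoint Φm) (p - qF)‖ := cbp_coord_abs_le_norm _ _
    have h3 : ‖(ContinuousLinearMap.adjoint Φm) (p - qF)‖
        ≤ ‖ContinuousLinearMap.adjoint Φm‖ * ‖p - qF‖ :=
      (ContinuousLinearMap.adjoint Φm).le_opNorm _
    have h4 : ‖ContinuousLinearMap.adjoint Φm‖ = ‖Φm‖ :=
      (ContinuousLinearMap.adjoint : _ ≃ₗᵢ⋆[ℝ] _).norm_map Φm
    have h5 : ‖Φm‖ * ‖p - qF‖ ≤ M * ‖p - qF‖ := by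
      apply mul_le_mul_of_nonneg_right _ (norm_nonneg _)
      rw [hMdef]; linarith [norm_nonneg Φp]
    have h6 : M * ‖p - qF‖ < M * C₂ := mul_lt_mul_of_pos_left hpqF_norm hMpos
    have h7 : M * C₂ = δ := by rw [hC2def]; field_simp
    have h8 := hδdn k hk
    have h9 : ((ContinuousLinearMap.adjoint Φm) (p - qF)) k < δ := by
      calc ((ContinuousLinearMap.adjoint Φm) (p - qF)) k
          ≤ |((ContinuousLinearMap.adjoint Φm) (p - qF)) k| := le_abs_self _
        _ ≤ ‖ContinuousLinearMap.adjoint Φm‖ * ‖p - qF‖ := le_trans h2 h3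
        _ = ‖Φm‖ * ‖p - qF‖ := by rw [h4]
        _ ≤ M * ‖p - qF‖ := h5
        _ < M * C₂ := h6
        _ = δ := h7
    linarith [h1, h9]
  have hcle : ∀ i, cvec i ≤ 1 := by
    intro i
    by_cases hi : i ∈ Iup
    · exact le_of_eq (hcon i hi)
    · exact (hcoff i hi).le
  have hdle : ∀ i, dvec i ≤ 1 := by
    intro i
    by_cases hi : i ∈ Idn
    · exact le_of_eq (hdon i hi)
    · exact (hdoff i hi).le
  -- primal iterate
  set ustar := ups a₀ b₀ + zu with hustardef
  set vstar := dns a₀ b₀ + zv with hvstardef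
  have hustar_off : ∀ i, i ∉ Iup → ustar i = 0 := by
    intro i hi
    have h1 : ustar i = ups a₀ b₀ i + zu i := rfl
    rw [h1, huz_off i hi, hzu i hi, add_zero]
  have hvstar_off : ∀ i, i ∉ Idn → vstar i = 0 := by
    intro i hi
    have h1 : vstar i = dns a₀ b₀ i + zv i := rfl
    rw [h1, hvz_off i hi, hzv i hi, add_zero]
  have hustar_pos : ∀ i ∈ Iup, 0 < ustar i := by
    intro i hi
    have hz1 : ζu i = zu i + lam * u₀ i := rfl
    have hb1 : |ζu i| ≤ ‖ζu‖ := cbp_coord_abs_le_norm _ _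
    have hb3 : c * ‖w‖ ≤ c * (C₂ * lam) := mul_le_mul_of_nonneg_left hw.le hcpos.le
    have hb4 : |u₀ i| ≤ ‖u₀‖ := cbp_coord_abs_le_norm _ _
    have hb5 : u₀ i ≤ N := by
      rw [hNdef]
      have := le_abs_self (u₀ i)
      linarith [norm_nonneg v₀]
    have hTui := hTu i hi
    rw [h2uz i] at hTui
    have hKl : K * lam ≤ ups a₀ b₀ i := by
      rw [hC1def] at hTui
      calc K * lam ≤ K * (1 / (2 * K) * (2 * ups a₀ b₀ i)) :=
            mul_le_mul_of_nonneg_left hTui hKpos.le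
        _ = ups a₀ b₀ i := by field_simp
    have h1 : ustar i = ups a₀ b₀ i + zu i := rfl
    have h2 : zu i = ζu i - lam * u₀ i := by rw [hz1]; ring
    have h3 : -(c * (C₂ * lam)) ≤ ζu i := by
      have := neg_abs_le (ζu i)
      linarith [le_trans hζu_le hb3, hb1]
    have h4 : lam * u₀ i ≤ lam * N := mul_le_mul_of_nonneg_left hb5 hlam.le
    have hKexp : K * lam = c * (C₂ * lam) + N * lam + lam := by rw [hKdef]; ring
    rw [h1, h2]
    nlinarith
  have hvstar_pos : ∀ i ∈ Idn, 0 < vstar i := by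
    intro i hi
    have hz1 : ζv i = zv i + lam * v₀ i := rfl
    have hb1 : |ζv i| ≤ ‖ζv‖ := cbp_coord_abs_le_norm _ _
    have hb3 : c * ‖w‖ ≤ c * (C₂ * lam) := mul_le_mul_of_nonneg_left hw.le hcpos.le
    have hb5 : v₀ i ≤ N := by
      rw [hNdef]
      have := le_abs_self (v₀ i)
      linarith [norm_nonneg u₀, cbp_coord_abs_le_norm v₀ i]
    have hTdi := hTd i hi
    rw [h2vz i] at hTdi
    have hKl : K * lam ≤ dns a₀ b₀ i := by
      rw [hC1def] at hTdi
      calc K * lam ≤ K * (1 / (2 * K) * (2 * dns a₀ b₀ i)) :=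
            mul_le_mul_of_nonneg_left hTdi hKpos.le
        _ = dns a₀ b₀ i := by field_simp
    have h1 : vstar i = dns a₀ b₀ i + zv i := rfl
    have h2 : zv i = ζv i - lam * v₀ i := by rw [hz1]; ring
    have h3 : -(c * (C₂ * lam)) ≤ ζv i := by
      have := neg_abs_le (ζv i)
      linarith [le_trans hζv_le hb3, hb1]
    have h4 : lam * v₀ i ≤ lam * N := mul_le_mul_of_nonneg_left hb5 hlam.le
    have hKexp : K * lam = c * (C₂ * lam) + N * lam + lam := by rw [hKdef]; ring
    rw [h1, h2]
    nlinarith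
  have hustar_nonneg : ∀ i, 0 ≤ ustar i := by
    intro i
    by_cases hi : i ∈ Iup
    · exact (hustar_pos i hi).le
    · exact le_of_eq (hustar_off i hi).symm
  have hvstar_nonneg : ∀ i, 0 ≤ vstar i := by
    intro i
    by_cases hi : i ∈ Idn
    · exact (hvstar_pos i hi).le
    · exact le_of_eq (hvstar_off i hi).symm
  set alam := a₀ + zu + zv with halamdef
  set blam := b₀ + (h/2) • (zu - zv) with hblamdef
  have halam_co : ∀ i, alam i = ustar i + vstar i := by
    intro i
    have h1 : alam i = a₀ i + zu i + zv i := rfl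
    have h2 : a₀ i = ups a₀ b₀ i + dns a₀ b₀ i := hsplit_a a₀ b₀ i
    have h3 : ustar i + vstar i = ups a₀ b₀ i + zu i + (dns a₀ b₀ i + zv i) := rfl
    rw [h1, h3]; linarith
  have hblam_co : ∀ i, blam i = (h/2) * (ustar i - vstar i) := by
    intro i
    have h1 : blam i = b₀ i + (h/2) * (zu i - zv i) := rfl
    have h2 : b₀ i = (h/2) * (ups a₀ b₀ i - dns a₀ b₀ i) := hsplit_b a₀ b₀ i
    have h3 : ustar i = ups a₀ b₀ i + zu i := rfl
    have h4 : vstar i = dns a₀ b₀ i + zv i := rfl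
    rw [h1, h2, h3, h4]; ring
  have hfeas_lam : ∀ i, 0 ≤ alam i ∧ |blam i| ≤ (h/2) * alam i := by
    intro i
    have h1 := hustar_nonneg i
    have h2 := hvstar_nonneg i
    constructor
    · rw [halam_co i]; linarith
    · rw [hblam_co i, halam_co i, abs_mul, abs_of_pos hh2]
      have h3 : |ustar i - vstar i| ≤ ustar i + vstar i :=
        abs_le.mpr ⟨by linarith, by linarith⟩
      exact mul_le_mul_of_nonneg_left h3 hh2.le
  have hups_alam : ∀ i, ups alam blam i = ustar i := by
    intro i
    rw [hups_apply, halam_co i, hblam_co i]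
    field_simp
    ring
  have hdns_alam : ∀ i, dns alam blam i = vstar i := by
    intro i
    rw [hdns_apply, halam_co i, hblam_co i]
    field_simp
    ring
  have hΨs : A alam + B blam = Φp ustar + Φm vstar := by
    rw [hAB alam blam, PiLp.ext hups_alam, PiLp.ext hdns_alam]
  -- residual identity
  have hresid : A a₀ + B b₀ + w - A alam - B blam = lam • p := by
    have e : A alam + B blam = (A a₀ + B b₀) + (A (zu + zv) + B ((h/2) • (zu - zv))) := by
      rw [halamdef, hblamdef]
      simp only [map_add]
      abel
    have e2 : A alam + B blam = (A a₀ + B b₀) + Az := by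
      rw [e, hcomb zu zv, ← hAzdef]
    rw [hlamp]
    have e3 : A a₀ + B b₀ + w - A alam - B blam
        = A a₀ + B b₀ + w - (A alam + B blam) := by abel
    rw [e3, e2]
    abel
  -- objective expansion
  have hexpand : ∀ a b : EuclideanSpace ℝ (Fin P), (∀ i, 0 ≤ a i ∧ |b i| ≤ (h/2) * a i) →
      (1/2) * ‖A a₀ + B b₀ + w - A a - B b‖^2 + lam * ∑ i, |a i|
      = ((1/2) * ‖A a₀ + B b₀ + w - A alam - B blam‖^2 + lam * ∑ i, |alam i|)
        + (1/2) * ‖(A a + B b) - (A alam + B blam)‖^2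
        + lam * ((∑ i, (1 - cvec i) * ups a b i) + (∑ i, (1 - dvec i) * dns a b i)) := by
    intro a b hfe
    have hy1 : A a₀ + B b₀ + w - A a - B b
        = (A a₀ + B b₀ + w - (A alam + B blam)) - ((A a + B b) - (A alam + B blam)) := by
      abel
    have hy2 : A a₀ + B b₀ + w - A alam - B blam
        = A a₀ + B b₀ + w - (A alam + B blam) := by abel
    have hres' : A a₀ + B b₀ + w - (A alam + B blam) = lam • p := by
      rw [← hresid]; abel
    have hinner1 : ⟪A a₀ + B b₀ + w - (A alam + B blam), (A a + B b) - (A alam + B blam)⟫_ℝ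
        = lam * (∑ i, cvec i * (ups a b i - ustar i)
            + ∑ i, dvec i * (dns a b i - vstar i)) := by
      rw [hres', real_inner_smul_left]
      congr 1
      have hdiff : (A a + B b) - (A alam + B blam)
          = Φp (ups a b - ustar) + Φm (dns a b - vstar) := by
        rw [hAB a b, hΨs, map_sub, map_sub]
        abel
      rw [hdiff, inner_add_right]
      have e1 : ⟪p, Φp (ups a b - ustar)⟫_ℝ = ∑ i, cvec i * (ups a b i - ustar i) := by
        rw [← ContinuousLinearMap.adjoint_inner_left, ← hcvecdef]
        have e1' : ⟪cvec, ups a b - ustar⟫_ℝ = ∑ i, cvec i * ((ups a b - ustar) i) := by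
          simp [PiLp.inner_apply, mul_comm]
        rw [e1']
        exact Finset.sum_congr rfl fun i _ => by
          rw [show (ups a b - ustar) i = ups a b i - ustar i from rfl]
      have e2 : ⟪p, Φm (dns a b - vstar)⟫_ℝ = ∑ i, dvec i * (dns a b i - vstar i) := by
        rw [← ContinuousLinearMap.adjoint_inner_left, ← hdvecdef]
        have e2' : ⟪dvec, dns a b - vstar⟫_ℝ = ∑ i, dvec i * ((dns a b - vstar) i) := by
          simp [PiLp.inner_apply, mul_comm]
        rw [e2']
        exact Finset.sum_congr rfl fun i _ => by
          rw [show (dns a b - vstar) i = dns a b i - vstar i from rfl]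
      rw [e1, e2]
    have hsum_a : ∑ i, |a i| = ∑ i, (ups a b i + dns a b i) := habs_sum a b hfe
    have hsum_al : ∑ i, |alam i| = ∑ i, (ustar i + vstar i) := by
      rw [habs_sum alam blam hfeas_lam]
      exact Finset.sum_congr rfl fun i _ => by rw [hups_alam i, hdns_alam i]
    have hsum_cu : ∑ i, cvec i * ustar i = ∑ i, ustar i := by
      refine Finset.sum_congr rfl fun i _ => ?_
      by_cases hi : i ∈ Iup
      · rw [hcon i hi, one_mul]
      · rw [hustar_off i hi, mul_zero]
    have hsum_dv : ∑ i, dvec i * vstar i = ∑ i, vstar i := by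
      refine Finset.sum_congr rfl fun i _ => ?_
      by_cases hi : i ∈ Idn
      · rw [hdon i hi, one_mul]
      · rw [hvstar_off i hi, mul_zero]
    have hs1 : ∑ i, (1 - cvec i) * ups a b i
        = ∑ i, ups a b i - ∑ i, cvec i * ups a b i := by
      rw [← Finset.sum_sub_distrib]
      exact Finset.sum_congr rfl fun i _ => by ring
    have hs2 : ∑ i, (1 - dvec i) * dns a b i
        = ∑ i, dns a b i - ∑ i, dvec i * dns a b i := by
      rw [← Finset.sum_sub_distrib]
      exact Finset.sum_congr rfl fun i _ => by ring
    have hs3 : ∑ i, cvec i * (ups a b i - ustar i)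
        = ∑ i, cvec i * ups a b i - ∑ i, cvec i * ustar i := by
      rw [← Finset.sum_sub_distrib]
      exact Finset.sum_congr rfl fun i _ => by ring
    have hs4 : ∑ i, dvec i * (dns a b i - vstar i)
        = ∑ i, dvec i * dns a b i - ∑ i, dvec i * vstar i := by
      rw [← Finset.sum_sub_distrib]
      exact Finset.sum_congr rfl fun i _ => by ring
    have hsa : ∑ i, (ups a b i + dns a b i) = ∑ i, ups a b i + ∑ i, dns a b i :=
      Finset.sum_add_distrib
    have hsal : ∑ i, (ustar i + vstar i) = ∑ i, ustar i + ∑ i, vstar i :=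
      Finset.sum_add_distrib
    rw [hy1, norm_sub_sq_real, hinner1, hy2, hsum_a, hsum_al, hsa, hsal,
      hs1, hs2, hs3, hs4, hsum_cu, hsum_dv]
    ring
  -- assemble
  refine ⟨alam, blam, ⟨hfeas_lam, ?_⟩, ?_, ?_, ?_, ?_⟩
  · intro a b hfe
    have he := hexpand a b hfe
    have h1 : (0:ℝ) ≤ (1/2) * ‖(A a + B b) - (A alam + B blam)‖^2 := by positivity
    have h2 : (0:ℝ) ≤ ∑ i, (1 - cvec i) * ups a b i :=
      Finset.sum_nonneg fun i _ =>
        mul_nonneg (by linarith [hcle i]) (hups_nonneg a b hfe i).1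
    have h3 : (0:ℝ) ≤ ∑ i, (1 - dvec i) * dns a b i :=
      Finset.sum_nonneg fun i _ =>
        mul_nonneg (by linarith [hdle i]) (hups_nonneg a b hfe i).2
    have h4 : (0:ℝ) ≤ lam * ((∑ i, (1 - cvec i) * ups a b i)
        + (∑ i, (1 - dvec i) * dns a b i)) :=
      mul_nonneg hlam.le (add_nonneg h2 h3)
    linarith
  · -- uniqueness
    intro a b hfe hmin
    have he := hexpand a b hfe
    have hminv := hmin alam blam hfeas_lam
    have h1 : (0:ℝ) ≤ (1/2) * ‖(A a + B b) - (A alam + B blam)‖^2 := by positivity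
    have h2 : (0:ℝ) ≤ ∑ i, (1 - cvec i) * ups a b i :=
      Finset.sum_nonneg fun i _ =>
        mul_nonneg (by linarith [hcle i]) (hups_nonneg a b hfe i).1
    have h3 : (0:ℝ) ≤ ∑ i, (1 - dvec i) * dns a b i :=
      Finset.sum_nonneg fun i _ =>
        mul_nonneg (by linarith [hdle i]) (hups_nonneg a b hfe i).2
    have h4 : (0:ℝ) ≤ lam * ((∑ i, (1 - cvec i) * ups a b i)
        + (∑ i, (1 - dvec i) * dns a b i)) :=
      mul_nonneg hlam.le (add_nonneg h2 h3)
    have hX0 : ‖(A a + B b) - (A alam + B blam)‖^2 ≤ 0 := by linarith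
    have hΨeq : A a + B b = A alam + B blam := by
      have h5 : ‖(A a + B b) - (A alam + B blam)‖ = 0 := by
        nlinarith [norm_nonneg ((A a + B b) - (A alam + B blam))]
      rwa [norm_eq_zero, sub_eq_zero] at h5
    have h5 : lam * ((∑ i, (1 - cvec i) * ups a b i)
        + (∑ i, (1 - dvec i) * dns a b i)) ≤ 0 := by linarith
    have hS12 : (∑ i, (1 - cvec i) * ups a b i) + (∑ i, (1 - dvec i) * dns a b i) ≤ 0 := by
      by_contra h7
      push_neg at h7
      nlinarith
    have hS1 : ∑ i, (1 - cvec i) * ups a b i = 0 := by linarith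
    have hS2 : ∑ i, (1 - dvec i) * dns a b i = 0 := by linarith
    have hterm1 := (Finset.sum_eq_zero_iff_of_nonneg fun i _ =>
      mul_nonneg (by linarith [hcle i]) (hups_nonneg a b hfe i).1).mp hS1
    have hterm2 := (Finset.sum_eq_zero_iff_of_nonneg fun i _ =>
      mul_nonneg (by linarith [hdle i]) (hups_nonneg a b hfe i).2).mp hS2
    have hu_off : ∀ k, k ∉ Iup → ups a b k = 0 := by
      intro k hk
      have h5 := hterm1 k (Finset.mem_univ k)
      have h6 : (0:ℝ) < 1 - cvec k := by linarith [hcoff k hk]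
      rcases mul_eq_zero.mp h5 with h7 | h7
      · exact absurd h7 (by linarith)
      · exact h7
    have hv_off : ∀ k, k ∉ Idn → dns a b k = 0 := by
      intro k hk
      have h5 := hterm2 k (Finset.mem_univ k)
      have h6 : (0:ℝ) < 1 - dvec k := by linarith [hdoff k hk]
      rcases mul_eq_zero.mp h5 with h7 | h7
      · exact absurd h7 (by linarith)
      · exact h7
    have hdiffu : ∀ k, k ∉ Iup → (ups a b - ustar) k = 0 := by
      intro k hk
      rw [show (ups a b - ustar) k = ups a b k - ustar k from rfl,
        hu_off k hk, hustar_off k hk, sub_zero]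
    have hdiffv : ∀ k, k ∉ Idn → (dns a b - vstar) k = 0 := by
      intro k hk
      rw [show (dns a b - vstar) k = dns a b k - vstar k from rfl,
        hv_off k hk, hvstar_off k hk, sub_zero]
    have hzero : Φp (ups a b - ustar) + Φm (dns a b - vstar) = 0 := by
      rw [map_sub, map_sub]
      have h5 : Φp (ups a b) - Φp ustar + (Φm (dns a b) - Φm vstar)
          = (Φp (ups a b) + Φm (dns a b)) - (Φp ustar + Φm vstar) := by abel
      rw [h5, ← hAB a b, ← hΨs, hΨeq, sub_self]
    obtain ⟨hueq, hveq⟩ := hfullrank _ _ hdiffu hdiffv hzero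
    have hueq' : ups a b = ustar := sub_eq_zero.mp hueq
    have hveq' : dns a b = vstar := sub_eq_zero.mp hveq
    constructor
    · ext i
      calc a i = ups a b i + dns a b i := hsplit_a a b i
        _ = ustar i + vstar i := by rw [hueq', hveq']
        _ = alam i := (halam_co i).symm
    · ext i
      calc b i = (h/2) * (ups a b i - dns a b i) := hsplit_b a b i
        _ = (h/2) * (ustar i - vstar i) := by rw [hueq', hveq']
        _ = blam i := (hblam_co i).symm
  · -- up support set
    ext i
    simp only [Set.mem_setOf_eq]
    have hcoord : alam i + (2/h) * blam i = 2 * ustar i := by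
      rw [halam_co i, hblam_co i]
      field_simp
      ring
    rw [hcoord]
    constructor
    · intro hpos
      by_contra hk
      rw [hustar_off i hk] at hpos
      linarith
    · intro hi
      linarith [hustar_pos i hi]
  · -- down support set
    ext i
    simp only [Set.mem_setOf_eq]
    have hcoord : alam i - (2/h) * blam i = 2 * vstar i := by
      rw [halam_co i, hblam_co i]
      field_simp
      ring
    rw [hcoord]
    constructor
    · intro hpos
      by_contra hk
      rw [hvstar_off i hk] at hpos
      linarith
    · intro hi
      linarith [hvstar_pos i hi]
  · -- closed form
    refine ⟨zu, zv, hzu, hzv, halamdef, hblamdef, ?_, ?_⟩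
    · intro i hi
      have hAdiff : A (alam - a₀) + B (blam - b₀) - w = Az - w := by
        have h1 : alam - a₀ = zu + zv := by rw [halamdef]; abel
        have h2 : blam - b₀ = (h/2) • (zu - zv) := by rw [hblamdef]; abel
        rw [h1, h2, hcomb zu zv, ← hAzdef]
      rw [hAdiff]
      have h3 : (ContinuousLinearMap.adjoint Φp) (Az - w) i
          = (ContinuousLinearMap.adjoint Φp) Az i - (ContinuousLinearMap.adjoint Φp) w i := by
        rw [map_sub]; rfl
      rw [h3, hNEu' i hi]; ring
    · intro i hi
      have hAdiff : A (alam - a₀) + B (blam - b₀) - w = Az - w := by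
        have h1 : alam - a₀ = zu + zv := by rw [halamdef]; abel
        have h2 : blam - b₀ = (h/2) • (zu - zv) := by rw [hblamdef]; abel
        rw [h1, h2, hcomb zu zv, ← hAzdef]
      rw [hAdiff]
      have h3 : (ContinuousLinearMap.adjoint Φm) (Az - w) i
          = (ContinuousLinearMap.adjoint Φm) Az i - (ContinuousLinearMap.adjoint Φm) w i := by
        rw [map_sub]; rfl
      rw [h3, hNEv' i hi]; ring
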